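/- Let σ be an invertible linear map on the n-dimensional vector space V over F_p whose minimal polynomial f equals its characteristic polynomial, with factorization f = ∏_{i} p_i^{k_i} into powers of distinct monic irreducible polynomials p_i. Then the order of σ as a group element equals ord(f) = lcm over i of u_i·p^{t_i}, where u_i = ord(p_i) and t_i is the least integer with p^{t_i} ≥ k_i. -/

import Mathlib

open Polynomial

private lemma aux_dvd {K : Type*} [CommRing K] {d m : ℕ} (h : d ∣ m) :
    (X : K[X]) ^ d - 1 ∣ X ^ m - 1 := by
  obtain ⟨c, rfl⟩ := h
  simpa [pow_mul] using sub_dvd_pow_sub_pow ((X : K[X]) ^ d) 1 c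

private lemma aux_ord_dvd {K : Type*} [Field K] {P : K[X]} {u : ℕ}
    (hu : IsLeast {m : ℕ | 0 < m ∧ P ∣ X ^ m - 1} u) {m : ℕ} (hm : P ∣ X ^ m - 1) :
    u ∣ m := by
  obtain ⟨⟨hu0, hudvd⟩, hleast⟩ := hu
  have hm' : m % u + u * (m / u) = m := Nat.mod_add_div m u
  have h1 : (X : K[X]) ^ m - 1
      = X ^ (m % u) * (X ^ (u * (m / u)) - 1) + (X ^ (m % u) - 1) := by
    rw [mul_sub, ← pow_add, hm']; ring
  have h2 : P ∣ (X : K[X]) ^ (m % u) - 1 := by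
    have h3 : P ∣ X ^ (m % u) * ((X : K[X]) ^ (u * (m / u)) - 1) :=
      dvd_mul_of_dvd_right (hudvd.trans (aux_dvd ⟨m / u, rfl⟩)) _
    have := (dvd_sub (h1 ▸ hm) h3)
    simpa using this
  rcases Nat.eq_zero_or_pos (m % u) with h0 | h0
  · exact Nat.dvd_of_mod_eq_zero h0
  · exact absurd (hleast ⟨h0, h2⟩) (Nat.not_le.2 (Nat.mod_lt _ hu0))

private lemma aux_p_not_dvd_u (p : ℕ) [Fact p.Prime] {P : (ZMod p)[X]}
    (hirr : Irreducible P) {u : ℕ}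
    (hu : IsLeast {m : ℕ | 0 < m ∧ P ∣ X ^ m - 1} u) : ¬ p ∣ u := by
  rintro ⟨v, rfl⟩
  have hp2 := (Fact.out : p.Prime).two_le
  have hv : 0 < v := by
    rcases Nat.eq_zero_or_pos v with rfl | h
    · simpa using hu.1.1
    exact h
  have hfrob : (X : (ZMod p)[X]) ^ (p * v) - 1 = ((X : (ZMod p)[X]) ^ v - 1) ^ p := by
    rw [sub_pow_char, one_pow, ← pow_mul, mul_comm]
  have hPdvd : P ∣ (X : (ZMod p)[X]) ^ v - 1 :=
    hirr.prime.dvd_of_dvd_pow (hfrob ▸ hu.1.2)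
  have := hu.2 ⟨hv, hPdvd⟩
  nlinarith

private lemma aux_pow_ord (p : ℕ) [Fact p.Prime] {P : (ZMod p)[X]} (hmon : P.Monic)
    (hirr : Irreducible P) {k u t : ℕ} (hk : 0 < k)
    (hu : IsLeast {m : ℕ | 0 < m ∧ P ∣ X ^ m - 1} u)
    (ht : IsLeast {m : ℕ | k ≤ p ^ m} t) (m : ℕ) :
    P ^ k ∣ (X : (ZMod p)[X]) ^ m - 1 ↔ u * p ^ t ∣ m := by
  have hp := (Fact.out : p.Prime)
  constructor
  · intro hd
    rcases Nat.eq_zero_or_pos m with rfl | hm0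
    · exact dvd_zero _
    set a := m.factorization p with ha
    set m' := m / p ^ a with hm'
    have hsplit : p ^ a * m' = m := Nat.ordProj_mul_ordCompl_eq_self m p
    have hpm' : ¬ p ∣ m' := Nat.not_dvd_ordCompl hp hm0.ne'
    have hm'0 : m' ≠ 0 := by rintro h; rw [h, mul_zero] at hsplit; omega
    have hfrob : (X : (ZMod p)[X]) ^ m - 1 = ((X : (ZMod p)[X]) ^ m' - 1) ^ p ^ a := by
      rw [sub_pow_char_pow, one_pow, ← pow_mul, mul_comm, hsplit]
    have hsep : ((X : (ZMod p)[X]) ^ m' - 1).Separable := by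
      have : ((m' : ZMod p)) ≠ 0 := by
        rwa [Ne, ZMod.natCast_eq_zero_iff]
      simpa using separable_X_pow_sub_C (1 : ZMod p) this one_ne_zero
    have hsq : Squarefree ((X : (ZMod p)[X]) ^ m' - 1) := hsep.squarefree
    have hPdvd : P ∣ (X : (ZMod p)[X]) ^ m' - 1 := by
      have hPp : P ∣ ((X : (ZMod p)[X]) ^ m' - 1) ^ p ^ a :=
        hfrob ▸ ((dvd_pow_self P hk.ne').trans hd)
      exact hirr.prime.dvd_of_dvd_pow hPp
    obtain ⟨h, hh⟩ := hPdvd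
    have hPh : ¬ P ∣ h := by
      intro hdvd
      exact hirr.not_isUnit (hsq P (by rw [hh]; exact mul_dvd_mul_left P hdvd))
    have hka : k ≤ p ^ a := by
      by_contra hlt
      push_neg at hlt
      have h1 : P ^ (p ^ a + 1) ∣ P ^ k := pow_dvd_pow P (by omega)
      have h2 : P ^ (p ^ a + 1) ∣ P ^ p ^ a * h ^ p ^ a := by
        have := h1.trans hd
        rwa [hfrob, hh, mul_pow] at this
      rw [pow_succ] at h2
      have h3 : P ∣ h ^ p ^ a :=
        (mul_dvd_mul_iff_left (pow_ne_zero (p ^ a) hirr.ne_zero)).1 h2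
      exact hPh (hirr.prime.dvd_of_dvd_pow h3)
    have hta : t ≤ a := ht.2 (by exact le_trans hka (le_refl _) : k ≤ p ^ a)
    have hudvd : u ∣ m := aux_ord_dvd hu ((dvd_pow_self P hk.ne').trans hd)
    have hpt : p ^ t ∣ m := (pow_dvd_pow p hta).trans (Nat.ordProj_dvd m p)
    have hcop : Nat.Coprime u (p ^ t) :=
      (Nat.Coprime.pow_right _ ((hp.coprime_iff_not_dvd.2 (aux_p_not_dvd_u p hirr hu)).symm))
    exact hcop.mul_dvd_of_dvd_of_dvd hudvd hpt
  · intro hdvd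
    have h1 : P ^ k ∣ (X : (ZMod p)[X]) ^ (u * p ^ t) - 1 := by
      have : (X : (ZMod p)[X]) ^ (u * p ^ t) - 1 = ((X : (ZMod p)[X]) ^ u - 1) ^ p ^ t := by
        rw [sub_pow_char_pow, one_pow, ← pow_mul]
      rw [this]
      exact (pow_dvd_pow P ht.1).trans (pow_dvd_pow_of_dvd hu.1.2 _)
    exact h1.trans (aux_dvd hdvd)

/-- Let `σ ∈ GL(n,p)` whose minimal polynomial `f` equals its characteristic polynomial,
with factorization `f = ∏ i, (P i)^(k i)` into powers of distinct monic irreducibles.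
Then the order of `σ` equals `ord(f) = lcm_i (u i * p^(t i))`, where `u i = ord(P i)` and
`t i` is the least integer with `p^(t i) ≥ k i`. -/
theorem stmt_3 (p n : ℕ) (hp : p.Prime) [Fact p.Prime]
    (σ : GL (Fin n) (ZMod p))
    (f : Polynomial (ZMod p))
    (hf : f = minpoly (ZMod p) (σ : Matrix (Fin n) (Fin n) (ZMod p)))
    (hchar : f = Matrix.charpoly (σ : Matrix (Fin n) (Fin n) (ZMod p)))
    (s : ℕ) (P : Fin s → Polynomial (ZMod p)) (k : Fin s → ℕ)
    (hP : ∀ i, (P i).Monic ∧ Irreducible (P i)) (hk : ∀ i, 0 < k i)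
    (hdist : Function.Injective P)
    (hfact : f = ∏ i, P i ^ k i)
    (u t : Fin s → ℕ)
    (hu : ∀ i, IsLeast {m : ℕ | 0 < m ∧ P i ∣ X ^ m - 1} (u i))
    (ht : ∀ i, IsLeast {m : ℕ | k i ≤ p ^ m} (t i)) :
    orderOf σ = Finset.univ.lcm (fun i : Fin s => u i * p ^ t i) ∧
      IsLeast {m : ℕ | 0 < m ∧ f ∣ X ^ m - 1} (orderOf σ) := by
  set M := (σ : Matrix (Fin n) (Fin n) (ZMod p)) with hM
  -- σ ^ m = 1 ↔ f ∣ X ^ m - 1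
  have step1 : ∀ m : ℕ, σ ^ m = 1 ↔ f ∣ (X : (ZMod p)[X]) ^ m - 1 := by
    intro m
    constructor
    · intro h
      have hMm : M ^ m = 1 := by
        have := congrArg Units.val h
        rwa [Units.val_pow_eq_pow_val] at this
      rw [hf]
      apply minpoly.dvd
      simp [hMm]
    · rintro ⟨g, hg⟩
      have h0 : aeval M ((X : (ZMod p)[X]) ^ m - 1) = 0 := by
        rw [hg, map_mul, hf, minpoly.aeval, zero_mul]
      have hMm : M ^ m = 1 := by
        have : M ^ m - 1 = 0 := by simpa using h0
        linear_combination (norm := abel) this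
      ext
      rw [Units.val_pow_eq_pow_val]
      simp [← hM, hMm]
  -- divisibility of f ↔ divisibility of each u i * p ^ t i
  have step2 : ∀ m : ℕ, f ∣ (X : (ZMod p)[X]) ^ m - 1 ↔ ∀ i, u i * p ^ t i ∣ m := by
    intro m
    constructor
    · intro h i
      have : P i ^ k i ∣ (X : (ZMod p)[X]) ^ m - 1 :=
        (Finset.dvd_prod_of_mem (fun i => P i ^ k i) (Finset.mem_univ i)).trans (by rw [← hfact]; exact h)
      exact (aux_pow_ord p (hP i).1 (hP i).2 (hk i) (hu i) (ht i) m).1 this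
    · intro h
      rw [hfact]
      apply Finset.prod_dvd_of_coprime
      · intro i _ j _ hij
        have hne : P i ≠ P j := fun hEq => hij (hdist hEq)
        have hcop : IsCoprime (P i) (P j) := by
          rw [(hP i).2.coprime_iff_not_dvd]
          intro hd
          exact hne (eq_of_monic_of_associated (hP i).1 (hP j).1
            ((hP i).2.associated_of_dvd (hP j).2 hd))
        exact (hcop.pow : IsCoprime (P i ^ k i) (P j ^ k j))
      · intro i _
        exact (aux_pow_ord p (hP i).1 (hP i).2 (hk i) (hu i) (ht i) m).2 (h i)
  set L := Finset.univ.lcm (fun i : Fin s => u i * p ^ t i) with hL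
  have hLpos : 0 < L := by
    apply Nat.pos_of_ne_zero
    intro h0
    rw [hL, Finset.lcm_eq_zero_iff] at h0
    obtain ⟨j, _, hj0⟩ := Set.mem_image _ _ _ |>.1 h0
    have := (hu j).1.1
    have := pow_pos hp.pos (t j)
    nlinarith
  -- both are least elements of the same set
  have hleast2 : IsLeast {m : ℕ | 0 < m ∧ f ∣ X ^ m - 1} (orderOf σ) := by
    constructor
    · exact ⟨orderOf_pos σ, (step1 _).1 (pow_orderOf_eq_one σ)⟩
    · rintro m ⟨hm0, hmd⟩
      exact orderOf_le_of_pow_eq_one hm0 ((step1 m).2 hmd)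
  have hleastL : IsLeast {m : ℕ | 0 < m ∧ f ∣ X ^ m - 1} L := by
    constructor
    · exact ⟨hLpos, (step2 L).2 fun i => Finset.dvd_lcm (Finset.mem_univ i)⟩
    · rintro m ⟨hm0, hmd⟩
      exact Nat.le_of_dvd hm0 (Finset.lcm_dvd fun i _ => (step2 m).1 hmd i)
  exact ⟨hleast2.unique hleastL, hleast2⟩
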